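/- Let T be an unrooted binary phylogenetic X-tree, let U be a 3-cuttable unrooted binary phylogenetic network on X, let e be a non-cut-edge of U, and let U' be the graph obtained from U by eliminating e. If U' displays T, then U displays T. -/

import Mathlib

/-- A graph with an explicit vertex set inside an ambient type `V`. -/
structure Net (V : Type) where
  verts : Set V
  graph : SimpleGraph V
  support : ∀ ⦃a b : V⦄, graph.Adj a b → a ∈ verts ∧ b ∈ verts

namespace Net

variable {V : Type}

/-- The degree of a vertex. -/
noncomputable def deg (N : Net V) (v : V) : ℕ := (N.graph.neighborSet v).ncard

/-- `N` is connected (as a graph on its vertex set `N.verts`). -/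
def ConnectedOn (N : Net V) : Prop :=
  N.verts.Nonempty ∧ ∀ a ∈ N.verts, ∀ b ∈ N.verts, N.graph.Reachable a b

/-- The set of leaves (degree-1 vertices). -/
def leaves (N : Net V) : Set V := {v | v ∈ N.verts ∧ N.deg v = 1}

/-- `N` is an unrooted binary phylogenetic network on the (label) set `X`:
it is simple (automatic for `SimpleGraph`), connected, every vertex has degree 1 or 3,
and the degree-1 vertices are exactly the elements of `X` (we identify each leaf with
its label). -/
def IsUBPN (N : Net V) (X : Set V) : Prop :=
  N.ConnectedOn ∧ (∀ v ∈ N.verts, N.deg v = 1 ∨ N.deg v = 3) ∧ N.leaves = X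

/-- Deleting a set of edges. -/
def deleteEdges (N : Net V) (D : Set (Sym2 V)) : Net V where
  verts := N.verts
  graph := N.graph.deleteEdges D
  support := fun _ _ h => N.support ((SimpleGraph.deleteEdges_adj.mp h).1)

/-- A cut-edge: an edge whose deletion disconnects the network. -/
def IsCutEdge (N : Net V) (e : Sym2 V) : Prop :=
  e ∈ N.graph.edgeSet ∧ ¬ (N.deleteEdges {e}).ConnectedOn

/-- `N` is `q`-cuttable: every cycle contains a path of at least `q` vertices
each of which is incident to a cut-edge. -/
def QCuttable (N : Net V) (q : ℕ) : Prop :=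
  ∀ ⦃r : V⦄ (C : N.graph.Walk r r), C.IsCycle →
    ∃ (x y : V) (P : N.graph.Walk x y), P.IsPath ∧ q ≤ P.support.length ∧
      (∀ v ∈ P.support, v ∈ C.support) ∧ (∀ e ∈ P.edges, e ∈ C.edges) ∧
      ∀ v ∈ P.support, ∃ e, N.IsCutEdge e ∧ v ∈ e

end Net

namespace Net

variable {V : Type}

/-- `T` is an unrooted binary phylogenetic `X`-tree: an unrooted binary phylogenetic
network on `X` with no cycles. -/
def IsTree (T : Net V) (X : Set V) : Prop := T.IsUBPN X ∧ T.graph.IsAcyclic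

/-- `(fv, fe)` is an embedding of the tree `T` in the network `U` (both with label set
`X`): `fv` maps vertices of `T` to vertices of `U` fixing the leaves, injectively, and
`fe` maps each edge of `T` to a path in `U` between the images of its endpoints, the
paths of distinct edges being pairwise edge-disjoint. -/
def IsEmbedding (T U : Net V) (X : Set V) (fv : V → V)
    (fe : ∀ ⦃a b : V⦄, T.graph.Adj a b → U.graph.Walk (fv a) (fv b)) : Prop :=
  (∀ a ∈ T.verts, fv a ∈ U.verts) ∧
  (∀ x ∈ X, fv x = x) ∧
  (∀ a ∈ T.verts, ∀ b ∈ T.verts, fv a = fv b → a = b) ∧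
  (∀ ⦃a b : V⦄ (h : T.graph.Adj a b), (fe h).IsPath) ∧
  (∀ ⦃a b c d : V⦄ (h : T.graph.Adj a b) (h' : T.graph.Adj c d), s(a, b) ≠ s(c, d) →
    ∀ e ∈ (fe h).edges, e ∉ (fe h').edges)

/-- `U` displays `T`: there is an embedding of `T` in `U` (equivalently, a subgraph of
`U` is a subdivision of `T`). -/
def Displays (U T : Net V) (X : Set V) : Prop :=
  ∃ (fv : V → V) (fe : ∀ ⦃a b : V⦄, T.graph.Adj a b → U.graph.Walk (fv a) (fv b)),
    IsEmbedding T U X fv fe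

end Net

open Net

open SimpleGraph

/-- Lift a walk edge-by-edge through a per-edge replacement. -/
def liftW {V : Type} {G G' : SimpleGraph V}
    (step : ∀ ⦃a c : V⦄, G'.Adj a c → G.Walk a c) :
    ∀ {x y : V}, G'.Walk x y → G.Walk x y
  | _, _, Walk.nil => Walk.nil
  | _, _, Walk.cons h p => (step h).append (liftW step p)

@[simp] lemma liftW_nil {V : Type} {G G' : SimpleGraph V}
    (step : ∀ ⦃a c : V⦄, G'.Adj a c → G.Walk a c) {x : V} :
    liftW step (Walk.nil : G'.Walk x x) = Walk.nil := rfl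

@[simp] lemma liftW_cons {V : Type} {G G' : SimpleGraph V}
    (step : ∀ ⦃a c : V⦄, G'.Adj a c → G.Walk a c) {x y z : V}
    (h : G'.Adj x y) (p : G'.Walk y z) :
    liftW step (Walk.cons h p) = (step h).append (liftW step p) := rfl

noncomputable def elimStep {V : Type} {G G' : SimpleGraph V} {u v u₁ u₂ v₁ v₂ : V}
    (hu₁ : G.Adj u u₁) (hu₂ : G.Adj u u₂) (hv₁ : G.Adj v v₁) (hv₂ : G.Adj v v₂)
    (hadj : ∀ a c, G'.Adj a c →
      (a = u₁ ∧ c = u₂) ∨ (a = u₂ ∧ c = u₁) ∨ (a = v₁ ∧ c = v₂) ∨ (a = v₂ ∧ c = v₁) ∨ G.Adj a c)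
    ⦃a c : V⦄ (h : G'.Adj a c) : G.Walk a c := by
  classical
  exact
  if h1 : a = u₁ ∧ c = u₂ then (Walk.cons hu₁.symm (Walk.cons hu₂ Walk.nil)).copy h1.1.symm h1.2.symm
  else if h2 : a = u₂ ∧ c = u₁ then (Walk.cons hu₂.symm (Walk.cons hu₁ Walk.nil)).copy h2.1.symm h2.2.symm
  else if h3 : a = v₁ ∧ c = v₂ then (Walk.cons hv₁.symm (Walk.cons hv₂ Walk.nil)).copy h3.1.symm h3.2.symm
  else if h4 : a = v₂ ∧ c = v₁ then (Walk.cons hv₂.symm (Walk.cons hv₁ Walk.nil)).copy h4.1.symm h4.2.symm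
  else Walk.cons (((((hadj a c h).resolve_left h1).resolve_left h2).resolve_left h3).resolve_left h4) Walk.nil

lemma elimStep_spec {V : Type} {G G' : SimpleGraph V} {u v u₁ u₂ v₁ v₂ : V}
    (hu₁ : G.Adj u u₁) (hu₂ : G.Adj u u₂) (hv₁ : G.Adj v v₁) (hv₂ : G.Adj v v₂)
    (hadj : ∀ a c, G'.Adj a c →
      (a = u₁ ∧ c = u₂) ∨ (a = u₂ ∧ c = u₁) ∨ (a = v₁ ∧ c = v₂) ∨ (a = v₂ ∧ c = v₁) ∨ G.Adj a c)
    ⦃a c : V⦄ (h : G'.Adj a c) :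
    ((elimStep hu₁ hu₂ hv₁ hv₂ hadj h).support = [a, c] ∧
      (∀ e ∈ (elimStep hu₁ hu₂ hv₁ hv₂ hadj h).edges, e = s(a, c)) ∧
      s(a, c) ≠ s(u₁, u₂) ∧ s(a, c) ≠ s(v₁, v₂)) ∨
    ((elimStep hu₁ hu₂ hv₁ hv₂ hadj h).support = [a, u, c] ∧
      (∀ e ∈ (elimStep hu₁ hu₂ hv₁ hv₂ hadj h).edges, e = s(u, u₁) ∨ e = s(u, u₂)) ∧
      s(a, c) = s(u₁, u₂)) ∨
    ((elimStep hu₁ hu₂ hv₁ hv₂ hadj h).support = [a, v, c] ∧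
      (∀ e ∈ (elimStep hu₁ hu₂ hv₁ hv₂ hadj h).edges, e = s(v, v₁) ∨ e = s(v, v₂)) ∧
      s(a, c) = s(v₁, v₂) ∧ s(u₁, u₂) ≠ s(v₁, v₂)) := by
  classical
  unfold elimStep
  split_ifs with h1 h2 h3 h4
  · obtain ⟨rfl, rfl⟩ := h1
    refine Or.inr (Or.inl ⟨by simp, ?_, rfl⟩)
    intro e he
    simp only [Walk.edges_copy, Walk.edges_cons, Walk.edges_nil, List.mem_cons,
      List.not_mem_nil, or_false] at he
    rcases he with rfl | rfl
    · exact Or.inl (Sym2.eq_swap)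
    · exact Or.inr rfl
  · obtain ⟨rfl, rfl⟩ := h2
    refine Or.inr (Or.inl ⟨by simp, ?_, Sym2.eq_swap⟩)
    intro e he
    simp only [Walk.edges_copy, Walk.edges_cons, Walk.edges_nil, List.mem_cons,
      List.not_mem_nil, or_false] at he
    rcases he with rfl | rfl
    · exact Or.inr (Sym2.eq_swap)
    · exact Or.inl rfl
  · obtain ⟨rfl, rfl⟩ := h3
    refine Or.inr (Or.inr ⟨by simp, ?_, rfl, ?_⟩)
    · intro e he
      simp only [Walk.edges_copy, Walk.edges_cons, Walk.edges_nil, List.mem_cons,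
        List.not_mem_nil, or_false] at he
      rcases he with rfl | rfl
      · exact Or.inl (Sym2.eq_swap)
      · exact Or.inr rfl
    · intro hq
      rw [Sym2.eq_iff] at hq
      rcases hq with ⟨rfl, rfl⟩ | ⟨rfl, rfl⟩
      · exact h1 ⟨rfl, rfl⟩
      · exact h2 ⟨rfl, rfl⟩
  · obtain ⟨rfl, rfl⟩ := h4
    refine Or.inr (Or.inr ⟨by simp, ?_, Sym2.eq_swap, ?_⟩)
    · intro e he
      simp only [Walk.edges_copy, Walk.edges_cons, Walk.edges_nil, List.mem_cons,
        List.not_mem_nil, or_false] at he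
      rcases he with rfl | rfl
      · exact Or.inr (Sym2.eq_swap)
      · exact Or.inl rfl
    · intro hq
      rw [Sym2.eq_iff] at hq
      rcases hq with ⟨rfl, rfl⟩ | ⟨rfl, rfl⟩
      · exact h2 ⟨rfl, rfl⟩
      · exact h1 ⟨rfl, rfl⟩
  · refine Or.inl ⟨by simp, by simp, ?_, ?_⟩
    · intro hq; rw [Sym2.eq_iff] at hq; tauto
    · intro hq; rw [Sym2.eq_iff] at hq; tauto

/-- Let `T` be an unrooted binary phylogenetic `X`-tree, let `U` be a
`3`-cuttable unrooted binary phylogenetic network on `X`, let `e = {u, v}` be a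
non-cut-edge of `U` (with further neighbors `u₁, u₂` of `u` and `v₁, v₂` of `v`), and let
`U'` be obtained from `U` by eliminating `e`.  If `U'` displays `T`, then `U` displays
`T`. -/
theorem displays_of_eliminate_displays {V : Type} [Fintype V]
    (U T : Net V) (X : Set V) (hU : U.IsUBPN X) (h3 : U.QCuttable 3)
    (hT : T.IsTree X)
    (u v u₁ u₂ v₁ v₂ : V)
    (huv : U.graph.Adj u v) (hnc : ¬ U.IsCutEdge s(u, v))
    (hu₁ : U.graph.Adj u u₁) (hu₂ : U.graph.Adj u u₂)
    (hv₁ : U.graph.Adj v v₁) (hv₂ : U.graph.Adj v v₂)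
    (hu₁₂ : u₁ ≠ u₂) (hu₁v : u₁ ≠ v) (hu₂v : u₂ ≠ v)
    (hv₁₂ : v₁ ≠ v₂) (hv₁u : v₁ ≠ u) (hv₂u : v₂ ≠ u)
    (U' : Net V)
    (hU'v : U'.verts = U.verts \ {u, v})
    (hU'a : ∀ a b, U'.graph.Adj a b ↔
      ((U.graph.Adj a b ∧ a ∉ ({u, v} : Set V) ∧ b ∉ ({u, v} : Set V)) ∨
        (a = u₁ ∧ b = u₂) ∨ (a = u₂ ∧ b = u₁) ∨
        (a = v₁ ∧ b = v₂) ∨ (a = v₂ ∧ b = v₁)))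
    (hd : U'.Displays T X) : U.Displays T X := by

  classical
  obtain ⟨fv, fe, he1, he2, he3, he4, he5⟩ := hd
  have hadj : ∀ a c, U'.graph.Adj a c →
      (a = u₁ ∧ c = u₂) ∨ (a = u₂ ∧ c = u₁) ∨ (a = v₁ ∧ c = v₂) ∨ (a = v₂ ∧ c = v₁) ∨
        U.graph.Adj a c := by
    intro a c h
    rcases (hU'a a c).mp h with h' | h' | h' | h' | h' <;> tauto
  set st := elimStep hu₁ hu₂ hv₁ hv₂ hadj with hst
  have huV : u ∉ U'.verts := by rw [hU'v]; simp
  have hvV : v ∉ U'.verts := by rw [hU'v]; simp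
  have huvne : u ≠ v := huv.ne
  have hvu : v ≠ u := huvne.symm
  have hsupp : ∀ {x y : V} (p : U'.graph.Walk x y), x ∈ U'.verts →
      ∀ w ∈ p.support, w ∈ U'.verts := by
    intro x y p
    induction p with
    | nil =>
      intro hx w hw
      rw [SimpleGraph.Walk.support_nil, List.mem_singleton] at hw
      subst hw; exact hx
    | cons h p ih =>
      intro hx w hw
      rw [SimpleGraph.Walk.support_cons, List.mem_cons] at hw
      rcases hw with rfl | hw
      · exact hx
      · exact ih (U'.support h).2 w hw
  have hN : ∀ {x y : V} (p : U'.graph.Walk x y), p.IsPath →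
      (∀ w ∈ p.support, w ∈ U'.verts) →
      (liftW st p).support.Nodup ∧
      (u ∈ (liftW st p).support ↔ s(u₁, u₂) ∈ p.edges) ∧
      (v ∈ (liftW st p).support ↔ s(v₁, v₂) ∈ p.edges ∧ s(u₁, u₂) ≠ s(v₁, v₂)) ∧
      (∀ w, w ≠ u → w ≠ v → (w ∈ (liftW st p).support ↔ w ∈ p.support)) := by
    intro x y p
    induction p with
    | @nil z =>
      intro _ hx
      have hxv : z ∈ U'.verts := hx z (by simp)
      refine ⟨by simp, ?_, ?_, fun w _ _ => by simp⟩
      · simp only [liftW_nil, SimpleGraph.Walk.support_nil, SimpleGraph.Walk.edges_nil,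
          List.mem_singleton, List.not_mem_nil, iff_false]
        rintro rfl; exact huV hxv
      · simp only [liftW_nil, SimpleGraph.Walk.support_nil, SimpleGraph.Walk.edges_nil,
          List.mem_singleton, List.not_mem_nil, false_and, iff_false]
        rintro rfl; exact hvV hxv
    | @cons a c d h p ih =>
      intro hp hs
      have htr' := hp.isTrail
      rw [SimpleGraph.Walk.isTrail_cons] at htr'
      have htr : s(a, c) ∉ p.edges := htr'.2
      rw [SimpleGraph.Walk.cons_isPath_iff] at hp
      obtain ⟨hp', hanot⟩ := hp
      have hps : ∀ w ∈ p.support, w ∈ U'.verts := fun w hw =>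
        hs w (by rw [SimpleGraph.Walk.support_cons]; exact List.mem_cons_of_mem _ hw)
      obtain ⟨hnd, hui, hvi, hwi⟩ := ih hp' hps
      have haV : a ∈ U'.verts := (U'.support h).1
      have hau : a ≠ u := fun e => huV (e ▸ haV)
      have hav : a ≠ v := fun e => hvV (e ▸ haV)
      have hanotS : a ∉ (liftW st p).support := fun hc => hanot ((hwi a hau hav).mp hc)
      rcases elimStep_spec hu₁ hu₂ hv₁ hv₂ hadj h with
        ⟨hsup, hed, hne1, hne2⟩ | ⟨hsup, hed, heq1⟩ | ⟨hsup, hed, heq2, hne12⟩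
      · -- normal edge
        have hrw : (liftW st (SimpleGraph.Walk.cons h p)).support
            = a :: (liftW st p).support := by
          rw [liftW_cons, SimpleGraph.Walk.support_append, hsup]
          simp only [List.cons_append, List.nil_append]
          rw [← SimpleGraph.Walk.support_eq_cons]
        refine ⟨?_, ?_, ?_, ?_⟩
        · rw [hrw]; exact List.nodup_cons.mpr ⟨hanotS, hnd⟩
        · rw [hrw, SimpleGraph.Walk.edges_cons]
          simp only [List.mem_cons]
          constructor
          · rintro (h' | h')
            · exact absurd h'.symm hau
            · exact Or.inr (hui.mp h')
          · rintro (h' | h')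
            · exact absurd h'.symm hne1
            · exact Or.inr (hui.mpr h')
        · rw [hrw, SimpleGraph.Walk.edges_cons]
          simp only [List.mem_cons]
          constructor
          · rintro (h' | h')
            · exact absurd h'.symm hav
            · obtain ⟨h1', h2'⟩ := hvi.mp h'
              exact ⟨Or.inr h1', h2'⟩
          · rintro ⟨h' | h', h2'⟩
            · exact absurd h'.symm hne2
            · exact Or.inr (hvi.mpr ⟨h', h2'⟩)
        · intro w hwu hwv
          rw [hrw, SimpleGraph.Walk.support_cons]
          simp only [List.mem_cons]
          rw [hwi w hwu hwv]
      · -- edge replaced by detour through u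
        have hrw : (liftW st (SimpleGraph.Walk.cons h p)).support
            = a :: u :: (liftW st p).support := by
          rw [liftW_cons, SimpleGraph.Walk.support_append, hsup]
          simp only [List.cons_append, List.nil_append]
          rw [← SimpleGraph.Walk.support_eq_cons]
        have hE1p : s(u₁, u₂) ∉ p.edges := heq1 ▸ htr
        have hunotS : u ∉ (liftW st p).support := fun hc => hE1p (hui.mp hc)
        refine ⟨?_, ?_, ?_, ?_⟩
        · rw [hrw]
          refine List.nodup_cons.mpr ⟨?_, List.nodup_cons.mpr ⟨hunotS, hnd⟩⟩
          simp only [List.mem_cons]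
          rintro (h' | h')
          · exact hau h'
          · exact hanotS h'
        · rw [hrw, SimpleGraph.Walk.edges_cons]
          simp only [List.mem_cons]
          constructor
          · intro _; exact Or.inl heq1.symm
          · intro _; exact Or.inr (Or.inl (by trivial))
        · rw [hrw, SimpleGraph.Walk.edges_cons]
          simp only [List.mem_cons]
          constructor
          · rintro (h' | h' | h')
            · exact absurd h'.symm hav
            · exact absurd h' hvu
            · obtain ⟨h1', h2'⟩ := hvi.mp h'
              exact ⟨Or.inr h1', h2'⟩
          · rintro ⟨h' | h', h2'⟩
            · exact absurd (h'.trans heq1).symm h2'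
            · exact Or.inr (Or.inr (hvi.mpr ⟨h', h2'⟩))
        · intro w hwu hwv
          rw [hrw, SimpleGraph.Walk.support_cons]
          simp only [List.mem_cons]
          constructor
          · rintro (h' | h' | h')
            · exact Or.inl h'
            · exact absurd h' hwu
            · exact Or.inr ((hwi w hwu hwv).mp h')
          · rintro (h' | h')
            · exact Or.inl h'
            · exact Or.inr (Or.inr ((hwi w hwu hwv).mpr h'))
      · -- edge replaced by detour through v
        have hrw : (liftW st (SimpleGraph.Walk.cons h p)).support
            = a :: v :: (liftW st p).support := by
          rw [liftW_cons, SimpleGraph.Walk.support_append, hsup]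
          simp only [List.cons_append, List.nil_append]
          rw [← SimpleGraph.Walk.support_eq_cons]
        have hE2p : s(v₁, v₂) ∉ p.edges := heq2 ▸ htr
        have hvnotS : v ∉ (liftW st p).support := fun hc => hE2p ((hvi.mp hc).1)
        refine ⟨?_, ?_, ?_, ?_⟩
        · rw [hrw]
          refine List.nodup_cons.mpr ⟨?_, List.nodup_cons.mpr ⟨hvnotS, hnd⟩⟩
          simp only [List.mem_cons]
          rintro (h' | h')
          · exact hav h'
          · exact hanotS h'
        · rw [hrw, SimpleGraph.Walk.edges_cons]
          simp only [List.mem_cons]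
          constructor
          · rintro (h' | h' | h')
            · exact absurd h'.symm hau
            · exact absurd h' huvne
            · exact Or.inr (hui.mp h')
          · rintro (h' | h')
            · exact absurd (h'.trans heq2) hne12
            · exact Or.inr (Or.inr (hui.mpr h'))
        · rw [hrw, SimpleGraph.Walk.edges_cons]
          simp only [List.mem_cons]
          constructor
          · intro _; exact ⟨Or.inl heq2.symm, hne12⟩
          · intro _; exact Or.inr (Or.inl (by trivial))
        · intro w hwu hwv
          rw [hrw, SimpleGraph.Walk.support_cons]
          simp only [List.mem_cons]
          constructor
          · rintro (h' | h' | h')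
            · exact Or.inl h'
            · exact absurd h' hwv
            · exact Or.inr ((hwi w hwu hwv).mp h')
          · rintro (h' | h')
            · exact Or.inl h'
            · exact Or.inr (Or.inr ((hwi w hwu hwv).mpr h'))
  have hE : ∀ {x y : V} (p : U'.graph.Walk x y), ∀ e ∈ (liftW st p).edges,
      (if e = s(u, u₁) ∨ e = s(u, u₂) then s(u₁, u₂)
       else if e = s(v, v₁) ∨ e = s(v, v₂) then s(v₁, v₂) else e) ∈ p.edges := by
    intro x y p
    induction p with
    | nil => intro e he; simp at he
    | @cons a c d h p ih =>
      intro e he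
      rw [liftW_cons, SimpleGraph.Walk.edges_append, List.mem_append] at he
      rw [SimpleGraph.Walk.edges_cons, List.mem_cons]
      rcases he with he | he
      · have haV : a ∈ U'.verts := (U'.support h).1
        have hcV : c ∈ U'.verts := (U'.support h).2
        have hau : a ≠ u := fun e' => huV (e' ▸ haV)
        have hav : a ≠ v := fun e' => hvV (e' ▸ haV)
        have hcu : c ≠ u := fun e' => huV (e' ▸ hcV)
        have hcv : c ≠ v := fun e' => hvV (e' ▸ hcV)
        rcases elimStep_spec hu₁ hu₂ hv₁ hv₂ hadj h with
          ⟨_, hed, _, _⟩ | ⟨_, hed, heq1⟩ | ⟨_, hed, heq2, _⟩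
        · have hee := hed e he
          subst hee
          rw [if_neg, if_neg]
          · exact Or.inl rfl
          · rintro (h' | h') <;> (rw [Sym2.eq_iff] at h'; tauto)
          · rintro (h' | h') <;> (rw [Sym2.eq_iff] at h'; tauto)
        · rcases hed e he with rfl | rfl
          · rw [if_pos (Or.inl rfl)]; exact Or.inl heq1.symm
          · rw [if_pos (Or.inr rfl)]; exact Or.inl heq1.symm
        · have hne : ¬ (e = s(u, u₁) ∨ e = s(u, u₂)) := by
            rcases hed e he with rfl | rfl <;>
              (rintro (h' | h') <;> (rw [Sym2.eq_iff] at h'; tauto))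
          rcases hed e he with rfl | rfl
          · rw [if_neg hne, if_pos (Or.inl rfl)]; exact Or.inl heq2.symm
          · rw [if_neg hne, if_pos (Or.inr rfl)]; exact Or.inl heq2.symm
      · exact Or.inr (ih e he)
  refine ⟨fv, fun {a b} h => liftW st (fe h), ?_, he2, he3, ?_, ?_⟩
  · intro a ha
    have := he1 a ha
    rw [hU'v] at this
    exact this.1
  · intro a b h
    have hstart : fv a ∈ U'.verts := he1 a (T.support h).1
    exact SimpleGraph.Walk.IsPath.mk' (hN (fe h) (he4 h) (hsupp (fe h) hstart)).1
  · intro a b c d h h' hne e heA heB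
    exact he5 h h' hne _ (hE (fe h) e heA) (hE (fe h') e heB)
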